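/- If G is a K_{r+1}-free graph with m edges, then the spectral radius of its adjacency matrix satisfies ρ(G) ≤ √(2m(1 − 1/r)). -/

import Mathlib

open Finset

/-- Real adjacency matrix of a simple graph. -/
noncomputable def adjMat {V : Type*} [Fintype V] (G : SimpleGraph V) : Matrix V V ℝ :=
  Matrix.of fun i j => haveI := Classical.dec (G.Adj i j); if G.Adj i j then (1 : ℝ) else 0

/-- `μ` is an eigenvalue of the adjacency matrix of `G`. -/
def IsAdjEigenvalue {V : Type*} [Fintype V] (G : SimpleGraph V) (μ : ℝ) : Prop :=
  ∃ x : V → ℝ, x ≠ 0 ∧ (adjMat G).mulVec x = μ • x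

/-- `ρ` is the spectral radius (largest adjacency eigenvalue) of `G`. -/
def IsSpecRad {V : Type*} [Fintype V] (G : SimpleGraph V) (ρ : ℝ) : Prop :=
  IsAdjEigenvalue G ρ ∧ ∀ μ : ℝ, IsAdjEigenvalue G μ → μ ≤ ρ

/-- `G` contains a copy of `F` as a subgraph. -/
def Contains {V W : Type*} (G : SimpleGraph V) (F : SimpleGraph W) : Prop :=
  ∃ f : W → V, Function.Injective f ∧ ∀ a b, F.Adj a b → G.Adj (f a) (f b)

/-- `G` contains a cycle of length `t`. -/
def HasCycleLen {V : Type*} (G : SimpleGraph V) (t : ℕ) : Prop :=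
  ∃ (v : V) (w : G.Walk v v), w.IsCycle ∧ w.length = t

open Matrix

set_option linter.unusedSectionVars false
set_option linter.unusedVariables false

section Aux
variable {V : Type*} [Fintype V] (G : SimpleGraph V)

lemma adjMat_apply (u v : V) :
    adjMat G u v = (haveI := Classical.dec (G.Adj u v); if G.Adj u v then (1:ℝ) else 0) := rfl

lemma adjMat_nonneg (u v : V) : 0 ≤ adjMat G u v := by
  rw [adjMat_apply]; split_ifs <;> norm_num

lemma adjMat_le_one (u v : V) : adjMat G u v ≤ 1 := by
  rw [adjMat_apply]; split_ifs <;> norm_num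

lemma adjMat_symm (u v : V) : adjMat G u v = adjMat G v u := by
  rw [adjMat_apply, adjMat_apply]
  by_cases h : G.Adj u v
  · rw [if_pos h, if_pos h.symm]
  · rw [if_neg h, if_neg (fun h' => h h'.symm)]

lemma adjMat_diag (u : V) : adjMat G u u = 0 := by
  rw [adjMat_apply, if_neg (G.irrefl)]

lemma adjMat_of_not_adj {u v : V} (h : ¬ G.Adj u v) : adjMat G u v = 0 := by
  rw [adjMat_apply, if_neg h]

lemma adjMat_sq (u v : V) : adjMat G u v ^ 2 = adjMat G u v := by
  rw [adjMat_apply]; split_ifs <;> norm_num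

lemma Qdot (y : V → ℝ) :
    ∑ u, ∑ v, adjMat G u v * (y u * y v) = y ⬝ᵥ (adjMat G).mulVec y := by
  simp only [dotProduct, Matrix.mulVec, Finset.mul_sum]
  exact sum_congr rfl fun u _ => sum_congr rfl fun v _ => by ring

end Aux

section Shift
variable {V : Type*} [Fintype V] [DecidableEq V]

lemma Qdot' (A : Matrix V V ℝ) (y : V → ℝ) :
    ∑ u, ∑ v, A u v * (y u * y v) = y ⬝ᵥ A.mulVec y := by
  simp only [dotProduct, Matrix.mulVec, Finset.mul_sum]
  exact sum_congr rfl fun u _ => sum_congr rfl fun v _ => by ring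

lemma shift_le (A : Matrix V V ℝ) (y w : V → ℝ) (i j : V)
    (hsym : ∀ u v, A u v = A v u) (hii : A i i = 0) (hjj : A j j = 0) (hij : A i j = 0)
    (hyj : 0 ≤ y j) (hw : w = Pi.single i (y j) - Pi.single j (y j))
    (hL : ∑ v, A j v * y v ≤ ∑ v, A i v * y v) :
    ∑ u, ∑ v, A u v * (y u * y v) ≤ ∑ u, ∑ v, A u v * ((y + w) u * (y + w) v) := by
  rw [Qdot', Qdot']
  set c := y j with hc
  have hAw : A.mulVec w = (fun u => A u i * c) - (fun u => A u j * c) := by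
    rw [hw, Matrix.mulVec_sub, Matrix.mulVec_single, Matrix.mulVec_single]
    ext u; simp; ring
  have hLdef : ∀ u, (A.mulVec y) u = ∑ v, A u v * y v := fun u => rfl
  have hsymm : ∀ u, ∑ v, y v * A v u = ∑ v, A u v * y v := by
    intro u
    exact sum_congr rfl fun v _ => by rw [hsym u v]; ring
  have key : (y + w) ⬝ᵥ A.mulVec (y + w)
      = y ⬝ᵥ A.mulVec y + 2 * c * (∑ v, A i v * y v - ∑ v, A j v * y v) := by
    rw [Matrix.mulVec_add, add_dotProduct, dotProduct_add,
      dotProduct_add]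
    have h1 : y ⬝ᵥ A.mulVec w = c * (∑ v, A i v * y v - ∑ v, A j v * y v) := by
      rw [hAw]
      simp only [dotProduct, Pi.sub_apply]
      have h : ∀ u, y u * (A u i * c - A u j * c) = (y u * A u i - y u * A u j) * c := by
        intro u; ring
      rw [sum_congr rfl fun u _ => h u, ← Finset.sum_mul, Finset.sum_sub_distrib]
      rw [hsymm i, hsymm j]; ring
    have h2 : w ⬝ᵥ A.mulVec y = c * (∑ v, A i v * y v - ∑ v, A j v * y v) := by
      rw [hw, sub_dotProduct, single_dotProduct, single_dotProduct,
        hLdef, hLdef]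
      ring
    have h3 : w ⬝ᵥ A.mulVec w = 0 := by
      rw [hAw, hw, sub_dotProduct, single_dotProduct, single_dotProduct]
      simp only [Pi.sub_apply]
      have hji : A j i = 0 := by rw [hsym j i]; exact hij
      rw [hii, hjj, hij, hji]; ring
    rw [h1, h2, h3]; ring
  rw [key]
  nlinarith [mul_nonneg hyj (sub_nonneg.2 hL)]

end Shift

set_option linter.unusedSectionVars false

lemma motzkinStraus {V : Type*} [Fintype V] (G : SimpleGraph V) {r : ℕ} (hr : 1 ≤ r)
    (hfree : G.CliqueFree (r + 1)) :
    ∀ (n : ℕ) (y : V → ℝ), (∀ v, 0 ≤ y v) →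
      (Finset.univ.filter fun v => y v ≠ 0).card ≤ n →
      ∑ u, ∑ v, adjMat G u v * (y u * y v) ≤ (1 - 1 / (r : ℝ)) * (∑ v, y v) ^ 2 := by
  classical
  intro n
  induction n with
  | zero =>
    intro y hy hcard
    have hz : ∀ v, y v = 0 := by
      intro v
      by_contra h
      have : v ∈ Finset.univ.filter fun v => y v ≠ 0 := by simp [h]
      have := Finset.card_pos.2 ⟨v, this⟩
      omega
    simp [hz]
  | succ n ih =>
    intro y hy hcard
    set S := Finset.univ.filter fun v => y v ≠ 0 with hS
    by_cases hcl : ∃ i ∈ S, ∃ j ∈ S, i ≠ j ∧ ¬ G.Adj i j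
    · obtain ⟨i, hi, j, hj, hne, hnadj⟩ := hcl
      -- WLOG-style helper applied to the right orientation
      have main : ∀ i j : V, i ∈ S → j ∈ S → i ≠ j → ¬ G.Adj i j →
          (∑ v, adjMat G j v * y v ≤ ∑ v, adjMat G i v * y v) →
          ∑ u, ∑ v, adjMat G u v * (y u * y v) ≤ (1 - 1 / (r : ℝ)) * (∑ v, y v) ^ 2 := by
        clear hi hj hne hnadj i j
        intro i j hi hj hne hnadj hL
        have hyj : 0 ≤ y j := hy j
        set w : V → ℝ := Pi.single i (y j) - Pi.single j (y j) with hw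
        set y' : V → ℝ := y + w with hy'
        have hwv : ∀ v, w v = (if v = i then y j else 0) - (if v = j then y j else 0) := by
          intro v
          simp [hw, Pi.single_apply, eq_comm]
        have hy'i : y' i = y i + y j := by
          simp [hy', hwv, hne]
        have hy'j : y' j = 0 := by
          simp [hy', hwv, hne.symm]
        have hy'v : ∀ v, v ≠ i → v ≠ j → y' v = y v := by
          intro v h1 h2; simp [hy', hwv, h1, h2]
        have hy'nn : ∀ v, 0 ≤ y' v := by
          intro v
          by_cases h1 : v = i
          · subst h1; rw [hy'i]; exact add_nonneg (hy v) hyj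
          · by_cases h2 : v = j
            · subst h2; rw [hy'j]
            · rw [hy'v v h1 h2]; exact hy v
        have hsum : ∑ v, y' v = ∑ v, y v := by
          simp only [hy', Pi.add_apply, Finset.sum_add_distrib]
          have : ∑ v, w v = 0 := by
            simp only [hw, Pi.sub_apply, Finset.sum_sub_distrib]
            rw [Finset.sum_pi_single', Finset.sum_pi_single']
            simp
          rw [this, add_zero]
        have hsub : (Finset.univ.filter fun v => y' v ≠ 0) ⊆ S.erase j := by
          intro v hv
          simp only [Finset.mem_filter, Finset.mem_univ, true_and] at hv
          rw [Finset.mem_erase]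
          constructor
          · rintro rfl; exact hv hy'j
          · by_cases h1 : v = i
            · subst h1; exact hi
            · by_cases h2 : v = j
              · exact absurd (h2 ▸ hy'j) hv
              · rw [hS, Finset.mem_filter]
                exact ⟨Finset.mem_univ v, by rwa [← hy'v v h1 h2]⟩
        have hcard' : (Finset.univ.filter fun v => y' v ≠ 0).card ≤ n := by
          have h1 := Finset.card_le_card hsub
          have h2 : (S.erase j).card = S.card - 1 := Finset.card_erase_of_mem hj
          have h3 : 1 ≤ S.card := Finset.card_pos.2 ⟨j, hj⟩
          omega
        calc ∑ u, ∑ v, adjMat G u v * (y u * y v)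
            ≤ ∑ u, ∑ v, adjMat G u v * (y' u * y' v) := by
              apply shift_le (adjMat G) y w i j (adjMat_symm G) (adjMat_diag G i)
                (adjMat_diag G j) (adjMat_of_not_adj G hnadj) hyj hw hL
          _ ≤ (1 - 1 / (r : ℝ)) * (∑ v, y' v) ^ 2 := ih y' hy'nn hcard'
          _ = (1 - 1 / (r : ℝ)) * (∑ v, y v) ^ 2 := by rw [hsum]
      rcases le_total (∑ v, adjMat G j v * y v) (∑ v, adjMat G i v * y v) with hL | hL
      · exact main i j hi hj hne hnadj hL
      · exact main j i hj hi hne.symm (fun h => hnadj h.symm) hL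
    · -- S is a clique
      push_neg at hcl
      have hclique : G.IsClique ↑S := by
        intro a ha b hb hab
        exact hcl a (by simpa using ha) b (by simpa using hb) hab
      have hSr : S.card ≤ r := by
        by_contra h
        push_neg at h
        obtain ⟨t, hts, htc⟩ := Finset.exists_subset_card_eq (by omega : r + 1 ≤ S.card)
        exact hfree t ⟨hclique.subset (by exact_mod_cast Finset.coe_subset.2 hts), htc⟩
      have hyS : ∀ v, v ∉ S → y v = 0 := by
        intro v hv; by_contra h; exact hv (by simp [hS, h])
      -- restrict sums to S
      have hQ : ∑ u, ∑ v, adjMat G u v * (y u * y v)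
          = ∑ u ∈ S, ∑ v ∈ S, adjMat G u v * (y u * y v) := by
        rw [← Finset.sum_subset S.subset_univ
          (fun u _ hu => by simp [hyS u hu])]
        exact Finset.sum_congr rfl fun u _ => (Finset.sum_subset S.subset_univ
          (fun v _ hv => by simp [hyS v hv])).symm
      have hs : ∑ v, y v = ∑ v ∈ S, y v := by
        exact (Finset.sum_subset S.subset_univ (fun v _ hv => hyS v hv)).symm
      set s := ∑ v ∈ S, y v with hsdef
      set q := ∑ v ∈ S, y v ^ 2 with hqdef
      have hQ2 : ∑ u ∈ S, ∑ v ∈ S, adjMat G u v * (y u * y v) ≤ s * s - q := by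
        have step : ∑ u ∈ S, ∑ v ∈ S, adjMat G u v * (y u * y v)
            ≤ ∑ u ∈ S, ∑ v ∈ S, (y u * y v - if u = v then y u * y v else 0) := by
          apply Finset.sum_le_sum
          intro u _
          apply Finset.sum_le_sum
          intro v _
          by_cases h : u = v
          · subst h
            rw [if_pos rfl, adjMat_diag]
            simp
          · rw [if_neg h]
            have := mul_le_of_le_one_left (mul_nonneg (hy u) (hy v)) (adjMat_le_one G u v)
            linarith [this, mul_nonneg (hy u) (hy v)]
        have eq2 : ∑ u ∈ S, ∑ v ∈ S, (y u * y v - if u = v then y u * y v else 0)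
            = s * s - q := by
          have inner : ∀ u ∈ S, ∑ v ∈ S, (y u * y v - if u = v then y u * y v else 0)
              = y u * s - y u ^ 2 := by
            intro u hu
            rw [Finset.sum_sub_distrib, ← Finset.mul_sum]
            congr 1
            rw [Finset.sum_ite_eq S u (fun v => y u * y v), if_pos hu]
            ring
          rw [Finset.sum_congr rfl inner, Finset.sum_sub_distrib, ← Finset.sum_mul]
        calc _ ≤ _ := step
          _ = s * s - q := eq2
      rcases Finset.eq_empty_or_nonempty S with hSe | hSne
      · have : ∀ v, y v = 0 := by
          intro v; apply hyS; rw [hSe]; exact Finset.notMem_empty v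
        simp [this]
      · have hk1 : 1 ≤ S.card := Finset.card_pos.2 hSne
        have hCS : s ^ 2 ≤ S.card * q := by
          simpa [hsdef, hqdef] using sq_sum_le_card_mul_sum_sq (s := S) (f := y)
        have hkpos : (0:ℝ) < S.card := by exact_mod_cast hk1
        have hrpos : (0:ℝ) < r := by exact_mod_cast hr
        have hkr : (S.card : ℝ) ≤ r := by exact_mod_cast hSr
        have hq : s ^ 2 / S.card ≤ q := by
          rw [div_le_iff₀ hkpos]; linarith [hCS]
        have h1k : 1 / (r:ℝ) ≤ 1 / S.card := by
          apply one_div_le_one_div_of_le hkpos hkr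
        have hs2 : (0:ℝ) ≤ s ^ 2 := sq_nonneg s
        calc ∑ u, ∑ v, adjMat G u v * (y u * y v)
            = ∑ u ∈ S, ∑ v ∈ S, adjMat G u v * (y u * y v) := hQ
          _ ≤ s * s - q := hQ2
          _ ≤ s ^ 2 - s ^ 2 / S.card := by
              have hss : s * s = s ^ 2 := by ring
              linarith
          _ = (1 - 1 / (S.card : ℝ)) * s ^ 2 := by field_simp
          _ ≤ (1 - 1 / (r : ℝ)) * s ^ 2 := by nlinarith
          _ = (1 - 1 / (r : ℝ)) * (∑ v, y v) ^ 2 := by rw [hs]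

theorem stmt0 {V : Type*} [Fintype V] (G : SimpleGraph V) (r m : ℕ) (hr : 1 ≤ r)
    (hfree : G.CliqueFree (r + 1)) (hm : Nat.card G.edgeSet = m)
    (hiso : ∀ v : V, ∃ u, G.Adj v u)
    (ρ : ℝ) (hρ : IsSpecRad G ρ) :
    ρ ≤ Real.sqrt (2 * m * (1 - 1 / (r : ℝ))) := by
  classical
  obtain ⟨⟨x, hx0, hxe⟩, -⟩ := hρ
  by_cases hρn : ρ ≤ 0
  · exact le_trans hρn (Real.sqrt_nonneg _)
  push_neg at hρn
  set s := ∑ v, x v ^ 2 with hsdef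
  have hs0 : 0 < s := by
    obtain ⟨v, hv⟩ : ∃ v, x v ≠ 0 := by
      by_contra h; push_neg at h; exact hx0 (funext h)
    exact Finset.sum_pos' (fun v _ => sq_nonneg _)
      ⟨v, Finset.mem_univ v, by positivity⟩
  have hrR : (1:ℝ) ≤ (r:ℝ) := by exact_mod_cast hr
  have hfac : (0:ℝ) ≤ 1 - 1 / (r:ℝ) := by
    have : 1 / (r:ℝ) ≤ 1 := by
      rw [div_le_one (by linarith)]; linarith
    linarith
  -- the total weight of the adjacency matrix is 2m
  have hdeg : ∑ u, ∑ v, adjMat G u v = 2 * (m:ℝ) := by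
    have h1 : ∀ u, ∑ v, adjMat G u v = (G.degree u : ℝ) := by
      intro u
      rw [SimpleGraph.degree, SimpleGraph.neighborFinset_eq_filter]
      rw [← Finset.sum_boole]
      exact Finset.sum_congr rfl fun v _ => by rw [adjMat_apply]
    rw [Finset.sum_congr rfl fun u _ => h1 u]
    have h2 : ∑ u, G.degree u = 2 * G.edgeFinset.card :=
      G.sum_degrees_eq_twice_card_edges
    have h3 : G.edgeFinset.card = m := by
      rw [SimpleGraph.edgeFinset_card, ← Nat.card_eq_fintype_card, hm]
    rw [← Nat.cast_sum, h2, h3]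
    push_cast
    ring
  -- eigenvalue identity
  have h1 : ρ * s = ∑ u, ∑ v, adjMat G u v * (x u * x v) := by
    rw [Qdot' (adjMat G) x, hxe, dotProduct_smul]
    have : x ⬝ᵥ x = s := by
      rw [hsdef, dotProduct]
      exact Finset.sum_congr rfl fun v _ => (sq (x v)).symm
    rw [this, smul_eq_mul]
  -- pass to absolute values
  set T := ∑ u, ∑ v, adjMat G u v * (|x u| * |x v|) with hTdef
  have h2 : ρ * s ≤ T := by
    rw [h1, hTdef]
    apply Finset.sum_le_sum; intro u _
    apply Finset.sum_le_sum; intro v _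
    apply mul_le_mul_of_nonneg_left _ (adjMat_nonneg G u v)
    calc x u * x v ≤ |x u * x v| := le_abs_self _
      _ = |x u| * |x v| := abs_mul _ _
  -- Cauchy–Schwarz on the product index set
  have h3 : T ^ 2 ≤ (2 * (m:ℝ)) * ∑ u, ∑ v, adjMat G u v * (x u ^ 2 * x v ^ 2) := by
    have hCS := Finset.sum_mul_sq_le_sq_mul_sq (Finset.univ ×ˢ Finset.univ)
      (fun p : V × V => adjMat G p.1 p.2)
      (fun p : V × V => adjMat G p.1 p.2 * (|x p.1| * |x p.2|))
    have e1 : ∑ p ∈ Finset.univ ×ˢ Finset.univ,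
        (fun p : V × V => adjMat G p.1 p.2) p *
        (fun p : V × V => adjMat G p.1 p.2 * (|x p.1| * |x p.2|)) p = T := by
      rw [hTdef, ← Finset.sum_product']
      refine Finset.sum_congr rfl fun p _ => ?_
      dsimp only
      rw [show adjMat G p.1 p.2 * (adjMat G p.1 p.2 * (|x p.1| * |x p.2|))
          = adjMat G p.1 p.2 ^ 2 * (|x p.1| * |x p.2|) from by ring, adjMat_sq]
    have e2 : ∑ p ∈ Finset.univ ×ˢ Finset.univ,
        ((fun p : V × V => adjMat G p.1 p.2) p) ^ 2 = 2 * (m:ℝ) := by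
      rw [← hdeg, ← Finset.sum_product' (f := fun u v => adjMat G u v)]
      exact Finset.sum_congr rfl fun p _ => adjMat_sq G p.1 p.2
    have e3 : ∑ p ∈ Finset.univ ×ˢ Finset.univ,
        ((fun p : V × V => adjMat G p.1 p.2) p * (|x p.1| * |x p.2|)) ^ 2
        = ∑ u, ∑ v, adjMat G u v * (x u ^ 2 * x v ^ 2) := by
      rw [← Finset.sum_product']
      refine Finset.sum_congr rfl fun p _ => ?_
      dsimp only
      rw [mul_pow, adjMat_sq, mul_pow, sq_abs, sq_abs]
    calc T ^ 2 = (∑ p ∈ Finset.univ ×ˢ Finset.univ,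
        (fun p : V × V => adjMat G p.1 p.2) p *
        (fun p : V × V => adjMat G p.1 p.2 * (|x p.1| * |x p.2|)) p) ^ 2 := by rw [e1]
      _ ≤ _ := hCS
      _ = _ := by rw [e2, e3]
  -- Motzkin–Straus
  have h4 : ∑ u, ∑ v, adjMat G u v * (x u ^ 2 * x v ^ 2)
      ≤ (1 - 1 / (r:ℝ)) * s ^ 2 := by
    have := motzkinStraus G hr hfree
      (Finset.univ.filter fun v => (fun w => x w ^ 2) v ≠ 0).card
      (fun v => x v ^ 2) (fun v => sq_nonneg _) le_rfl
    simpa [hsdef] using this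
  -- combine
  have h5 : (ρ * s) ^ 2 ≤ (2 * (m:ℝ) * (1 - 1 / (r:ℝ))) * s ^ 2 := by
    have hT0 : 0 ≤ T := le_trans (le_of_lt (mul_pos hρn hs0)) h2
    have := pow_le_pow_left₀ (le_of_lt (mul_pos hρn hs0)) h2 2
    calc (ρ * s) ^ 2 ≤ T ^ 2 := this
      _ ≤ (2 * (m:ℝ)) * ((1 - 1 / (r:ℝ)) * s ^ 2) := by
          refine le_trans h3 ?_
          apply mul_le_mul_of_nonneg_left h4 (by positivity)
      _ = (2 * (m:ℝ) * (1 - 1 / (r:ℝ))) * s ^ 2 := by ring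
  have h6 : ρ ^ 2 ≤ 2 * (m:ℝ) * (1 - 1 / (r:ℝ)) := by
    have hs2 : 0 < s ^ 2 := by positivity
    nlinarith [h5]
  rw [show ρ ≤ Real.sqrt (2 * m * (1 - 1 / (r : ℝ))) ↔ _ from
    Real.le_sqrt (le_of_lt hρn) (by positivity)]
  exact h6
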